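/- Let π be a subset seed of span m over a finite alphabet A with distinguished letter 1, let r = |R_π| and w = m − r. Then every non-final state (X,t) reachable in S_π from the initial state (∅,0) satisfies max(X ∪ {0}) + t ≤ m − 1, and the set of all pairs (X,t) with X ⊆ R_π, t ∈ ℕ and max(X ∪ {0}) + t ≤ m − 1 has cardinality at most (w+1)·2^r − 1. Consequently, counting all final states as a single state, the automaton S_π has at most (w+1)·2^r states. -/

import Mathlib

/-- The set `R_π` of non-`#` positions of a subset seed `π` of span `m` over an alphabet
with distinguished "match" letter `one`: positions `i ∈ [1..m]` with `π i ≠ {one}`. -/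
def Rpi {A : Type*} [DecidableEq A] (m : ℕ) (one : A) (π : ℕ → Finset A) : Finset ℕ :=
  (Finset.Icc 1 m).filter (fun i => π i ≠ {one})

/-- Transition function `ψ` of the subset seed automaton `S_π`.  States are pairs
`(X, t)` with `X : Finset ℕ` and `t : ℕ`; note that `max (X ∪ {0}) = X.sup id`.
A state is final when `max (X ∪ {0}) + t ≥ m`; final states are fixed.  On a
non-final state `(X, t)`: reading `one` yields `(X, t+1)`; reading `a ≠ one`
yields `(X_U ∪ X_V, 0)` with `X_U = {x ∈ R_π : x ≤ t+1 ∧ a ∈ π x}` and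
`X_V = {x+t+1 : x ∈ X, x+t+1 ≤ m, a ∈ π (x+t+1)}`. -/
def seedStep {A : Type*} [DecidableEq A] (m : ℕ) (one : A) (π : ℕ → Finset A)
    (q : Finset ℕ × ℕ) (a : A) : Finset ℕ × ℕ :=
  if m ≤ q.1.sup id + q.2 then q
  else if a = one then (q.1, q.2 + 1)
  else ((Rpi m one π).filter (fun x => x ≤ q.2 + 1 ∧ a ∈ π x) ∪
        ((q.1.filter (fun x => x + q.2 + 1 ≤ m ∧ a ∈ π (x + q.2 + 1))).image
          (fun x => x + q.2 + 1)), 0)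

/-- The extension `ψ*` of the transition function of `S_π` to words,
reading letters left to right from state `q`. -/
def seedRun {A : Type*} [DecidableEq A] (m : ℕ) (one : A) (π : ℕ → Finset A)
    (q : Finset ℕ × ℕ) : List A → Finset ℕ × ℕ
  | [] => q
  | a :: s => seedRun m one π (seedStep m one π q a) s

/-- every reachable non-final state `(X,t)` of `S_π` satisfies
`max(X ∪ {0}) + t ≤ m − 1` (expressed as `X.sup id + t + 1 ≤ m`); the set of all pairs
`(X,t)` with `X ⊆ R_π` and `max(X ∪ {0}) + t ≤ m − 1` has cardinality at most
`(w+1)·2^r − 1`, where `r = |R_π|` and `w = m − r`; consequently, counting all final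
states as a single state, `S_π` has at most `(w+1)·2^r` states. -/

lemma sum_bound (m : ℕ) (R : Finset ℕ) : R ⊆ Finset.Icc 1 m →
    ∑ X ∈ R.powerset, (m - X.sup id) ≤ (m - R.card + 1) * 2 ^ R.card - 1 := by
  induction R using Finset.induction_on_max with
  | empty => intro _; simp
  | insert a s ha ih =>
    intro hsub
    have has : a ∉ s := fun h => lt_irrefl a (ha a h)
    have hsub' : s ⊆ Finset.Icc 1 m := fun x hx => hsub (Finset.mem_insert_of_mem hx)
    have ham : a ≤ m := (Finset.mem_Icc.mp (hsub (Finset.mem_insert_self a s))).2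
    have hcard : s.card + 1 ≤ a := by
      have hss : insert a s ⊆ Finset.Icc 1 a := by
        intro x hx
        rcases Finset.mem_insert.mp hx with h | hx
        · rw [h]
          exact Finset.mem_Icc.mpr
            ⟨(Finset.mem_Icc.mp (hsub (Finset.mem_insert_self a s))).1, le_rfl⟩
        · exact Finset.mem_Icc.mpr ⟨(Finset.mem_Icc.mp (hsub' hx)).1, le_of_lt (ha x hx)⟩
      have := Finset.card_le_card hss
      simpa [Finset.card_insert_of_notMem has, Nat.card_Icc] using this
    have hdisj : Disjoint s.powerset (s.powerset.image (insert a)) := by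
      rw [Finset.disjoint_left]
      intro X hX hX'
      obtain ⟨Y, hY, rfl⟩ := Finset.mem_image.mp hX'
      exact has (Finset.mem_powerset.mp hX (Finset.mem_insert_self a Y))
    have hinj : ∀ X ∈ s.powerset, ∀ Y ∈ s.powerset, insert a X = insert a Y → X = Y := by
      intro X hX Y hY h
      have haX : a ∉ X := fun h' => has (Finset.mem_powerset.mp hX h')
      have haY : a ∉ Y := fun h' => has (Finset.mem_powerset.mp hY h')
      rw [← Finset.erase_insert haX, ← Finset.erase_insert haY, h]
    rw [Finset.powerset_insert, Finset.sum_union hdisj, Finset.sum_image hinj]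
    have hsup : ∀ X ∈ s.powerset, m - (insert a X).sup id = m - a := by
      intro X hX
      have : (insert a X).sup id = a := by
        rw [Finset.sup_insert]
        exact sup_eq_left.mpr (Finset.sup_le fun x hx =>
          le_of_lt (ha x (Finset.mem_powerset.mp hX hx)))
      rw [this]
    rw [Finset.sum_congr rfl hsup, Finset.sum_const, Finset.card_powerset, smul_eq_mul]
    have hcm : s.card + 1 ≤ m := le_trans hcard ham
    obtain ⟨w, hw⟩ : ∃ w, m = w + s.card + 1 := ⟨m - s.card - 1, by omega⟩
    have ihs := ih hsub'
    have hP : 1 ≤ 2 ^ s.card := Nat.one_le_two_pow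
    have h1 : (∑ X ∈ s.powerset, (m - X.sup id)) + 1 ≤ (w + 2) * 2 ^ s.card := by
      have : m - s.card + 1 = w + 2 := by omega
      rw [this] at ihs
      have : 1 ≤ (w + 2) * 2 ^ s.card := le_trans hP (Nat.le_mul_of_pos_left _ (by omega))
      omega
    have h2 : m - a ≤ w := by omega
    have h3 : (∑ X ∈ s.powerset, (m - X.sup id)) + 2 ^ s.card * (m - a) + 1
        ≤ (w + 2) * 2 ^ s.card + 2 ^ s.card * w := by
      have := Nat.mul_le_mul_left (2 ^ s.card) h2
      omega
    have h4 : (w + 2) * 2 ^ s.card + 2 ^ s.card * w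
        = (m - (insert a s).card + 1) * 2 ^ (insert a s).card := by
      rw [Finset.card_insert_of_notMem has]
      have : m - (s.card + 1) + 1 = w + 1 := by omega
      rw [this, pow_succ]
      ring
    omega

theorem seedAutomaton_number_of_states
    {A : Type*} [DecidableEq A] (m : ℕ) (one : A) (π : ℕ → Finset A)
    (hπ : ∀ i ∈ Finset.Icc 1 m, one ∈ π i) :
    (∀ (X : Finset ℕ) (t : ℕ), (∃ u : List A, seedRun m one π (∅, 0) u = (X, t)) →
        ¬ (m ≤ X.sup id + t) → X.sup id + t + 1 ≤ m) ∧
    ((((Rpi m one π).powerset ×ˢ Finset.range m).filter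
        (fun q : Finset ℕ × ℕ => q.1.sup id + q.2 + 1 ≤ m)).card
      ≤ (m - (Rpi m one π).card + 1) * 2 ^ (Rpi m one π).card - 1) ∧
    ((((Rpi m one π).powerset ×ˢ Finset.range m).filter
        (fun q : Finset ℕ × ℕ => q.1.sup id + q.2 + 1 ≤ m)).card + 1
      ≤ (m - (Rpi m one π).card + 1) * 2 ^ (Rpi m one π).card) := by
  classical
  set R := Rpi m one π with hR
  have hRsub : R ⊆ Finset.Icc 1 m := Finset.filter_subset _ _
  have hrm : R.card ≤ m := by
    have := Finset.card_le_card hRsub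
    simpa [Nat.card_Icc] using this
  have key : (((R.powerset ×ˢ Finset.range m).filter
        (fun q : Finset ℕ × ℕ => q.1.sup id + q.2 + 1 ≤ m)).card
      = ∑ X ∈ R.powerset, (m - X.sup id)) := by
    rw [Finset.card_filter, Finset.sum_product]
    refine Finset.sum_congr rfl fun X _ => ?_
    rw [← Finset.card_filter]
    have : (Finset.range m).filter (fun t => X.sup id + t + 1 ≤ m)
        = Finset.range (m - X.sup id) := by
      ext t
      simp only [Finset.mem_filter, Finset.mem_range]
      omega
    rw [this, Finset.card_range]
  have hbound := sum_bound m R hRsub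
  have hN : 1 ≤ (m - R.card + 1) * 2 ^ R.card :=
    le_trans Nat.one_le_two_pow (Nat.le_mul_of_pos_left _ (by omega))
  refine ⟨fun X t _ h => by omega, ?_, ?_⟩
  · omega
  · omega
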